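/- Let α = [a₀; a₁, …, a_k, \overline{b₁, …, b_l}] be the continued fraction expansion of a quadratic irrational (a₀ ∈ ℤ, aᵢ ≥ 1 for 1 ≤ i ≤ k, bⱼ ≥ 1, the block b₁,…,b_l repeating forever), with k ≥ 1 and a_k < b_l. Then the conjugate of α equals the value of the continued fraction ᾱ = [a₀, …, a_{k−2}, a_{k−1}−1, 1, b_l−a_k−1, \overline{b_{l−1}, b_{l−2}, …, b₁, b_l}] (entries equal to 0 are allowed and the value is understood as the limit of the convergents of this sequence). -/

import Mathlib

open Filter

noncomputable section

/-- Continued fraction numerators: `cfNum c (n+1) = pₙ` with `p₋₁ = 1`, `p₀ = c 0`,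
`pₙ = cₙ pₙ₋₁ + pₙ₋₂`. -/
def cfNum (c : ℕ → ℤ) : ℕ → ℤ
  | 0 => 1
  | 1 => c 0
  | n + 2 => c (n + 1) * cfNum c (n + 1) + cfNum c n

/-- Continued fraction denominators: `cfDen c (n+1) = qₙ` with `q₋₁ = 0`, `q₀ = 1`,
`qₙ = cₙ qₙ₋₁ + qₙ₋₂`. -/
def cfDen (c : ℕ → ℤ) : ℕ → ℤ
  | 0 => 0
  | 1 => 1
  | n + 2 => c (n + 1) * cfDen c (n + 1) + cfDen c n

/-- The `n`-th convergent `pₙ/qₙ` of the continued fraction with partial quotients `c`. -/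
def cfConv (c : ℕ → ℤ) (n : ℕ) : ℝ := (cfNum c (n + 1) : ℝ) / (cfDen c (n + 1) : ℝ)

/-- The Gauss map iterates of `α`. -/
def cfXi (α : ℝ) : ℕ → ℝ
  | 0 => α
  | n + 1 => 1 / Int.fract (cfXi α n)

/-- The `n`-th partial quotient of `α`. -/
def cfA (α : ℝ) (n : ℕ) : ℤ := ⌊cfXi α n⌋


namespace CFaux

lemma num_rec (c : ℕ → ℤ) (n : ℕ) :
    cfNum c (n + 2) = c (n + 1) * cfNum c (n + 1) + cfNum c n := rfl

lemma den_rec (c : ℕ → ℤ) (n : ℕ) :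
    cfDen c (n + 2) = c (n + 1) * cfDen c (n + 1) + cfDen c n := rfl

lemma det_eq (c : ℕ → ℤ) (n : ℕ) :
    cfNum c (n + 1) * cfDen c n - cfNum c n * cfDen c (n + 1) = (-1) ^ (n + 1) := by
  induction n with
  | zero => simp [cfNum, cfDen]
  | succ n ih =>
    rw [num_rec, den_rec, pow_succ]
    ring_nf
    ring_nf at ih
    linarith [ih]

lemma tail_eq (c : ℕ → ℤ) (t : ℕ → ℝ) (n : ℕ)
    (hrec : ∀ m, m ≤ n → t m = (c m : ℝ) + 1 / t (m + 1))
    (hne : ∀ m, m ≤ n → t (m + 1) ≠ 0) :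
    t 0 * (t (n + 1) * (cfDen c (n + 1) : ℝ) + (cfDen c n : ℝ))
      = t (n + 1) * (cfNum c (n + 1) : ℝ) + (cfNum c n : ℝ) := by
  induction n with
  | zero =>
    have h := hrec 0 le_rfl
    have h2 := hne 0 le_rfl
    show t 0 * (t 1 * ((1 : ℤ) : ℝ) + ((0 : ℤ) : ℝ)) = t 1 * ((c 0 : ℤ) : ℝ) + ((1 : ℤ) : ℝ)
    rw [h]
    field_simp
    ring
  | succ n ih =>
    have ih' := ih (fun m hm => hrec m (hm.trans (Nat.le_succ n)))
      (fun m hm => hne m (hm.trans (Nat.le_succ n)))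
    have h := hrec (n + 1) le_rfl
    have h2 := hne (n + 1) le_rfl
    have key : t (n + 1) * t (n + 2) = (c (n + 1) : ℝ) * t (n + 2) + 1 := by
      rw [h]; field_simp
    rw [num_rec, den_rec]
    push_cast
    linear_combination t (n + 2) * ih'
      - (t 0 * ((cfDen c (n + 1) : ℤ) : ℝ) - ((cfNum c (n + 1) : ℤ) : ℝ)) * key


lemma den_nonneg (c : ℕ → ℤ) (hc : ∀ i, 1 ≤ i → 0 ≤ c i) (n : ℕ) : 0 ≤ cfDen c n := by
  have H : ∀ n, 0 ≤ cfDen c n ∧ 0 ≤ cfDen c (n + 1) := by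
    intro n
    induction n with
    | zero => exact ⟨le_refl 0, by norm_num [cfDen]⟩
    | succ n ih =>
      refine ⟨ih.2, ?_⟩
      rw [den_rec]
      have h1 := hc (n + 1) (by omega)
      nlinarith [ih.1, ih.2]
  exact (H n).1

lemma den_ge_two_step (c : ℕ → ℤ) (hc : ∀ i, 1 ≤ i → 0 ≤ c i) (n : ℕ) :
    cfDen c n ≤ cfDen c (n + 2) := by
  rw [den_rec]
  have h1 := hc (n + 1) (by omega)
  nlinarith [den_nonneg c hc (n + 1)]

lemma den_odd (c : ℕ → ℤ) (hc : ∀ i, 1 ≤ i → 0 ≤ c i) (m : ℕ) :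
    1 ≤ cfDen c (2 * m + 1) := by
  induction m with
  | zero => norm_num [cfDen]
  | succ m ih =>
    have := den_ge_two_step c hc (2 * m + 1)
    have e : 2 * (m + 1) + 1 = 2 * m + 1 + 2 := by ring
    rw [e]; omega

lemma den_growth (c : ℕ → ℤ) (K : ℕ) (hc : ∀ i, 1 ≤ i → 0 ≤ c i)
    (hcK : ∀ i, K ≤ i → 1 ≤ c i) (m : ℕ) :
    1 ≤ cfDen c (2 * K + 1 + m) ∧ (m : ℤ) + 1 ≤ cfDen c (2 * K + 1 + m + 1) := by
  induction m with
  | zero =>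
    refine ⟨den_odd c hc K, ?_⟩
    have e : 2 * K + 1 + 0 + 1 = (2 * K) + 2 := by ring
    rw [e, den_rec]
    have h1 := hcK (2 * K + 1) (by omega)
    have h2 := den_odd c hc K
    have h3 := den_nonneg c hc (2 * K)
    push_cast
    nlinarith
  | succ m ih =>
    constructor
    · have h := ih.2
      have e : 2 * K + 1 + (m + 1) = 2 * K + 1 + m + 1 := by omega
      rw [e]; omega
    · have e : 2 * K + 1 + (m + 1) + 1 = (2 * K + 1 + m) + 2 := by ring
      rw [e, den_rec]
      have h1 := hcK (2 * K + 1 + m + 1) (by omega)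
      have h2 := ih.1
      have h3 := ih.2
      push_cast
      nlinarith

lemma conv_tendsto (c : ℕ → ℤ) (t : ℕ → ℝ) (K : ℕ)
    (hrec : ∀ m, t m = (c m : ℝ) + 1 / t (m + 1))
    (hpos : ∀ m, 0 < t (m + 1))
    (hc0 : ∀ i, 1 ≤ i → 0 ≤ c i)
    (hcK : ∀ i, K ≤ i → 1 ≤ c i) :
    Tendsto (cfConv c) atTop (nhds (t 0)) := by
  set M := 2 * K + 1 with hM
  have hbound : ∀ n, M ≤ n → |cfConv c n - t 0| ≤ ((n : ℝ) - M + 1)⁻¹ := by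
    intro n hn
    have hQ0 : (1 : ℤ) ≤ cfDen c n := by
      have := (den_growth c K hc0 hcK (n - M)).1
      have e : 2 * K + 1 + (n - M) = n := by omega
      rwa [e] at this
    have hQ1 : (n : ℤ) - M + 1 ≤ cfDen c (n + 1) := by
      have := (den_growth c K hc0 hcK (n - M)).2
      have e : 2 * K + 1 + (n - M) + 1 = n + 1 := by omega
      rw [e] at this
      have : ((n - M : ℕ) : ℤ) + 1 ≤ cfDen c (n + 1) := this
      omega
    have hQ0R : (1 : ℝ) ≤ (cfDen c n : ℝ) := by exact_mod_cast hQ0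
    have hQ1R : (n : ℝ) - M + 1 ≤ (cfDen c (n + 1) : ℝ) := by exact_mod_cast hQ1
    have hQ1pos : (0 : ℝ) < (cfDen c (n + 1) : ℝ) := by
      have : (1 : ℝ) ≤ (n : ℝ) - M + 1 := by
        have : (M : ℝ) ≤ (n : ℝ) := by exact_mod_cast hn
        linarith
      linarith
    have hT := hpos n
    have hD : (0 : ℝ) < t (n + 1) * (cfDen c (n + 1) : ℝ) + (cfDen c n : ℝ) := by
      nlinarith
    have hid := tail_eq c t n (fun m _ => hrec m) (fun m _ => (hpos m).ne')
    have ht0 : t 0 = (t (n + 1) * (cfNum c (n + 1) : ℝ) + (cfNum c n : ℝ)) /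
        (t (n + 1) * (cfDen c (n + 1) : ℝ) + (cfDen c n : ℝ)) := by
      rw [eq_div_iff hD.ne']; linarith [hid]
    have hdet : ((cfNum c (n + 1) : ℝ) * (cfDen c n : ℝ)
        - (cfNum c n : ℝ) * (cfDen c (n + 1) : ℝ)) = (-1 : ℝ) ^ (n + 1) := by
      exact_mod_cast det_eq c n
    have hdiff : cfConv c n - t 0 = ((-1 : ℝ) ^ (n + 1)) /
        ((cfDen c (n + 1) : ℝ) * (t (n + 1) * (cfDen c (n + 1) : ℝ) + (cfDen c n : ℝ))) := by
      rw [cfConv, ht0, div_sub_div _ _ hQ1pos.ne' hD.ne']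
      rw [← hdet]
      congr 1
      ring
    rw [hdiff, abs_div, abs_pow, abs_neg, abs_one, one_pow]
    rw [abs_of_pos (by nlinarith)]
    rw [div_eq_mul_inv, one_mul]
    apply inv_anti₀
    · have : (M : ℝ) ≤ (n : ℝ) := by exact_mod_cast hn
      linarith
    · have h1 : (cfDen c (n + 1) : ℝ) ≤ (cfDen c (n + 1) : ℝ) *
          (t (n + 1) * (cfDen c (n + 1) : ℝ) + (cfDen c n : ℝ)) := by
        nlinarith [mul_nonneg (mul_nonneg hQ1pos.le hT.le) hQ1pos.le,
          mul_nonneg hQ1pos.le (sub_nonneg.mpr hQ0R)]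
      linarith
  have hg : Tendsto (fun n : ℕ => ((n : ℝ) - M + 1)⁻¹) atTop (nhds 0) := by
    apply Tendsto.inv_tendsto_atTop
    have : Tendsto (fun n : ℕ => (n : ℝ) + (1 - M)) atTop atTop :=
      tendsto_atTop_add_const_right _ _ tendsto_natCast_atTop_atTop
    convert this using 2 with n
    ring
  have : Tendsto (fun n => cfConv c n - t 0) atTop (nhds 0) := by
    apply squeeze_zero_norm' _ hg
    filter_upwards [eventually_ge_atTop M] with n hn
    simpa [Real.norm_eq_abs] using hbound n hn
  simpa using this.add_const (t 0)


lemma xi_succ (α : ℝ) (n : ℕ) : cfXi α (n + 1) = 1 / Int.fract (cfXi α n) := rfl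

lemma xi_irr (α : ℝ) (h : Irrational α) : ∀ n, Irrational (cfXi α n) := by
  intro n
  induction n with
  | zero => exact h
  | succ n ih =>
    rw [xi_succ, one_div]
    exact (Irrational.sub_intCast ih ⌊cfXi α n⌋).inv

lemma fract_irr_pos {x : ℝ} (h : Irrational x) : 0 < Int.fract x :=
  Int.fract_pos.mpr (fun he => (h.ne_int ⌊x⌋) he)

lemma xi_gt_one (α : ℝ) (h : Irrational α) (n : ℕ) : 1 < cfXi α (n + 1) := by
  rw [xi_succ]
  have h1 := fract_irr_pos (xi_irr α h n)
  have h2 := Int.fract_lt_one (cfXi α n)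
  rw [lt_div_iff₀ h1]
  linarith

lemma xi_rec (α : ℝ) (h : Irrational α) (n : ℕ) :
    cfXi α n = (cfA α n : ℝ) + 1 / cfXi α (n + 1) := by
  rw [xi_succ, one_div_one_div, cfA]
  exact (Int.floor_add_fract (cfXi α n)).symm

lemma xi_shift (α : ℝ) (m : ℕ) : ∀ n, cfXi (cfXi α m) n = cfXi α (m + n) := by
  intro n
  induction n with
  | zero => rfl
  | succ n ih =>
    have e : m + (n + 1) = (m + n) + 1 := by omega
    rw [xi_succ, ih, ← xi_succ, e]

lemma cfA_shift (α : ℝ) (m n : ℕ) : cfA (cfXi α m) n = cfA α (m + n) := by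
  rw [cfA, cfA, xi_shift]

lemma tendsto_cfA (x : ℝ) (hx : Irrational x) :
    Tendsto (cfConv (cfA x)) atTop (nhds x) := by
  have := conv_tendsto (cfA x) (cfXi x) 1
    (fun m => xi_rec x hx m)
    (fun m => lt_trans one_pos (xi_gt_one x hx m))
    ?_ ?_
  · exact this
  · intro i hi
    obtain ⟨j, rfl⟩ : ∃ j, i = j + 1 := ⟨i - 1, by omega⟩
    have := xi_gt_one x hx j
    rw [cfA]
    have : (1 : ℤ) ≤ ⌊cfXi x (j + 1)⌋ := Int.le_floor.mpr (by exact_mod_cast this.le)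
    omega
  · intro i hi
    obtain ⟨j, rfl⟩ : ∃ j, i = j + 1 := ⟨i - 1, by omega⟩
    have := xi_gt_one x hx j
    exact Int.le_floor.mpr (by exact_mod_cast this.le)

lemma cfA_unique (x y : ℝ) (hx : Irrational x) (hy : Irrational y)
    (h : ∀ n, cfA x n = cfA y n) : x = y := by
  have hx' := tendsto_cfA x hx
  have hy' := tendsto_cfA y hy
  have he : cfA x = cfA y := funext h
  rw [he] at hx'
  exact tendsto_nhds_unique hx' hy'

/-- bounded entries positivity for denominators -/
lemma den_head (c : ℕ → ℤ) : ∀ n, (∀ i, 1 ≤ i → i ≤ n → 1 ≤ c i) →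
    0 ≤ cfDen c n ∧ 1 ≤ cfDen c (n + 1) := by
  intro n
  induction n with
  | zero => intro _; norm_num [cfDen]
  | succ n ih =>
    intro h
    have ihh := ih (fun i h1 h2 => h i h1 (h2.trans (Nat.le_succ n)))
    refine ⟨by linarith [ihh.2], ?_⟩
    rw [den_rec]
    have := h (n + 1) (by omega) le_rfl
    nlinarith [ihh.1, ihh.2]

lemma num_pos_all (c : ℕ → ℤ) (h : ∀ i, 1 ≤ c i) :
    ∀ n, 1 ≤ cfNum c n ∧ 1 ≤ cfNum c (n + 1) := by
  intro n
  induction n with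
  | zero => exact ⟨le_refl 1, h 0⟩
  | succ n ih =>
    refine ⟨ih.2, ?_⟩
    rw [num_rec]
    have := h (n + 1)
    nlinarith [ih.1, ih.2]

end CFaux

set_option maxHeartbeats 2000000 in
/-- If the quadratic irrational `α` has continued fraction expansion
`[a₀; a₁, …, a_k, overline{b₁, …, b_l}]` with `k ≥ 1` and `a_k < b_l`, then its conjugate `ᾱ`
is the value (limit of convergents) of the continued fraction
`[a₀, …, a_{k-2}, a_{k-1} - 1, 1, b_l - a_k - 1, overline{b_{l-1}, b_{l-2}, …, b₁, b_l}]`.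
Here `b j` denotes `b_{j+1}` for `0 ≤ j < l`. -/
theorem conjugate_cf_case_lt (k l : ℕ) (a b : ℕ → ℤ) (hk : 1 ≤ k) (hl : 1 ≤ l)
    (ha : ∀ i, 1 ≤ i → i ≤ k → 1 ≤ a i) (hb : ∀ j, j < l → 1 ≤ b j)
    (hlt : a k < b (l - 1))
    (α α' : ℝ) (qa qh qb : ℤ) (hqa : qa ≠ 0) (hirr : Irrational α)
    (hroot : (qa : ℝ) * α ^ 2 + (qh : ℝ) * α + (qb : ℝ) = 0)
    (hroot' : (qa : ℝ) * α' ^ 2 + (qh : ℝ) * α' + (qb : ℝ) = 0)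
    (hne : α' ≠ α)
    (hexp : ∀ n, cfA α n = if n ≤ k then a n else b ((n - (k + 1)) % l)) :
    Tendsto (cfConv (fun i =>
      if i + 1 < k then a i
      else if i + 1 = k then a (k - 1) - 1
      else if i = k then 1
      else if i = k + 1 then b (l - 1) - a k - 1
      else b ((2 * l - 2 - (i - (k + 2)) % l) % l))) atTop (nhds α') := by
  set c : ℕ → ℤ := fun i =>
      if i + 1 < k then a i
      else if i + 1 = k then a (k - 1) - 1
      else if i = k then 1
      else if i = k + 1 then b (l - 1) - a k - 1
      else b ((2 * l - 2 - (i - (k + 2)) % l) % l) with hcdef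
  -- values of c
  have hc_lt : ∀ i, i + 1 < k → c i = a i := by
    intro i h; rw [hcdef]; simp only; rw [if_pos h]
  have hc_km1 : c (k - 1) = a (k - 1) - 1 := by
    rw [hcdef]; simp only; rw [if_neg (by omega), if_pos (by omega)]
  have hc_k : c k = 1 := by
    rw [hcdef]; simp only; rw [if_neg (by omega), if_neg (by omega)]; simp
  have hc_k1 : c (k + 1) = b (l - 1) - a k - 1 := by
    rw [hcdef]; simp only
    rw [if_neg (by omega), if_neg (by omega), if_neg (by omega)]; simp
  have hc_tail : ∀ i, k + 2 ≤ i → c i = b ((2 * l - 2 - (i - (k + 2)) % l) % l) := by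
    intro i h; rw [hcdef]; simp only
    rw [if_neg (by omega), if_neg (by omega), if_neg (by omega), if_neg (by omega)]
  -- β and period data
  set β := cfXi α (k + 1) with hβdef
  have hβirr : Irrational β := CFaux.xi_irr α hirr (k + 1)
  have hβgt : 1 < β := CFaux.xi_gt_one α hirr k
  set g : ℕ → ℤ := fun n => b (n % l) with hgdef
  have hg1 : ∀ n, 1 ≤ g n := fun n => hb (n % l) (Nat.mod_lt n hl)
  have hAtail : ∀ n, cfA α (k + 1 + n) = g n := by
    intro n
    rw [hexp, if_neg (by omega), hgdef]
    have e : k + 1 + n - (k + 1) = n := by omega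
    rw [e]
  have hβper : cfXi α (k + 1 + l) = β := by
    apply CFaux.cfA_unique _ _ (CFaux.xi_irr α hirr _) (CFaux.xi_irr α hirr _)
    intro n
    rw [CFaux.cfA_shift, CFaux.cfA_shift, hexp, hexp,
      if_neg (by omega), if_neg (by omega)]
    have e1 : k + 1 + l + n - (k + 1) = l + n := by omega
    have e2 : k + 1 + n - (k + 1) = n := by omega
    rw [e1, e2, Nat.add_mod_left]
  set P : ℤ := cfNum g l with hPdef
  set P' : ℤ := cfNum g (l - 1) with hP'def
  set Q : ℤ := cfDen g l with hQdef
  set Q' : ℤ := cfDen g (l - 1) with hQ'def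
  have hl1 : l - 1 + 1 = l := by omega
  have hP'1 : 1 ≤ P' := (CFaux.num_pos_all g hg1 (l - 1)).1
  have hP1 : 1 ≤ P := (CFaux.num_pos_all g hg1 l).1
  have hQ1 : 1 ≤ Q := by
    have := (CFaux.den_head g (l - 1) (fun i _ _ => hg1 i)).2
    rwa [hl1] at this
  have hQ'0 : 0 ≤ Q' := (CFaux.den_head g (l - 1) (fun i _ _ => hg1 i)).1
  have hQR : ((Q : ℤ) : ℝ) ≠ 0 := Int.cast_ne_zero.mpr (by omega)
  have hQRpos : (0 : ℝ) < (Q : ℝ) := by exact_mod_cast hQ1.trans_lt' (by norm_num)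
  have hP'R : (1 : ℝ) ≤ (P' : ℝ) := by exact_mod_cast hP'1
  have hPR : (1 : ℝ) ≤ (P : ℝ) := by exact_mod_cast hP1
  have hQRge : (1 : ℝ) ≤ (Q : ℝ) := by exact_mod_cast hQ1
  -- the fixed point equation for β
  have hξpos : ∀ m : ℕ, 0 < cfXi α (m + 1) :=
    fun m => lt_trans one_pos (CFaux.xi_gt_one α hirr m)
  have hid1 : β * (β * (Q : ℝ) + (Q' : ℝ)) = β * (P : ℝ) + (P' : ℝ) := by
    have h := CFaux.tail_eq g (fun n => cfXi α (k + 1 + n)) (l - 1)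
      (fun m _ => by
        have h1 := CFaux.xi_rec α hirr (k + 1 + m)
        rw [hAtail m] at h1
        simpa [show k + 1 + m + 1 = k + 1 + (m + 1) by omega] using h1)
      (fun m _ => by
        have : 0 < cfXi α (k + 1 + (m + 1)) := by
          have := hξpos (k + m + 1)
          simpa [show k + m + 1 + 1 = k + 1 + (m + 1) by omega] using this
        exact this.ne')
    rw [hl1] at h
    simp only [Nat.add_zero] at h
    rw [hβper] at h
    exact h
  have hq1 : (Q : ℝ) * β ^ 2 + ((Q' : ℝ) - (P : ℝ)) * β - (P' : ℝ) = 0 := by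
    linear_combination hid1
  -- conjugate of β
  set S : ℝ := ((P : ℝ) - (Q' : ℝ)) / (Q : ℝ) with hSdef
  set β' : ℝ := S - β with hβ'def
  have hQS : (Q : ℝ) * S = (P : ℝ) - (Q' : ℝ) := by
    rw [hSdef]; field_simp
  have hq2 : (Q : ℝ) * β' ^ 2 + ((Q' : ℝ) - (P : ℝ)) * β' - (P' : ℝ) = 0 := by
    rw [hβ'def]; linear_combination hq1 + (S - 2 * β) * hQS
  have hprod : (Q : ℝ) * (β * β') = -(P' : ℝ) := by
    rw [hβ'def]; linear_combination β * hQS - hq1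
  have hQβpos : (0 : ℝ) < (Q : ℝ) * β := by nlinarith
  have hβ'eq : β' = -(P' : ℝ) / ((Q : ℝ) * β) := by
    rw [eq_div_iff hQβpos.ne']; linear_combination hprod
  have hβ'neg : β' < 0 := by
    rw [hβ'eq]
    apply div_neg_of_neg_of_pos _ hQβpos
    linarith
  have hβ'irr : Irrational β' := by
    rintro ⟨q, hq⟩
    apply hβirr
    refine ⟨((P : ℚ) - (Q' : ℚ)) / (Q : ℚ) - q, ?_⟩
    push_cast
    have : (q : ℝ) = β' := hq
    rw [hβ'def, hSdef] at this
    linarith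
  have hβ'ne : β' ≠ 0 := hβ'neg.ne
  -- the reversed-period tails w
  set w : ℕ → ℝ := fun n => Nat.rec (-1 / β') (fun i wi => (b i : ℝ) + 1 / wi) n with hwdef
  have hw0 : w 0 = -1 / β' := rfl
  have hwS : ∀ i, w (i + 1) = (b i : ℝ) + 1 / w i := fun i => rfl
  have hw0pos : 0 < w 0 := by
    rw [hw0]; apply div_pos_of_neg_of_neg _ hβ'neg; norm_num
  have hwpos : ∀ i, i ≤ l → 0 < w i ∧ (1 ≤ i → 1 < w i) := by
    intro i
    induction i with
    | zero => exact fun _ => ⟨hw0pos, by omega⟩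
    | succ i ih =>
      intro hi
      have hbi : (1 : ℝ) ≤ (b i : ℝ) := by exact_mod_cast hb i (by omega)
      have hwi := (ih (by omega)).1
      have : 1 < w (i + 1) := by
        rw [hwS]
        have : 0 < 1 / w i := by positivity
        linarith
      exact ⟨by linarith, fun _ => this⟩
  have hwne : ∀ i, i ≤ l → w i ≠ 0 := fun i h => (hwpos i h).1.ne'
  -- closure: w l = w 0
  set bb : ℕ → ℝ := fun n => -1 / w n with hbbdef
  have hbbne : ∀ i, i ≤ l → bb i ≠ 0 := by
    intro i h
    rw [hbbdef]
    simp only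
    exact div_ne_zero (by norm_num) (hwne i h)
  have hid2 : bb 0 * (bb l * (Q : ℝ) + (Q' : ℝ)) = bb l * (P : ℝ) + (P' : ℝ) := by
    have h := CFaux.tail_eq g bb (l - 1)
      (fun m hm => by
        have hm' : m + 1 ≤ l := by omega
        have h1 : w m ≠ 0 := hwne m (by omega)
        have h2 : w (m + 1) ≠ 0 := hwne (m + 1) hm'
        have hgm : g m = b m := by
          rw [hgdef]; simp only; rw [Nat.mod_eq_of_lt (by omega)]
        rw [hbbdef]; simp only
        have e1 : (1 : ℝ) / (-1 / w (m + 1)) = -w (m + 1) := by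
          field_simp
        rw [e1, hwS m, hgm]
        ring)
      (fun m hm => hbbne (m + 1) (by omega))
    rwa [hl1] at h
  have hbb0 : bb 0 = β' := by
    rw [hbbdef]; simp only [hw0]; field_simp
  have hq2' : β' * (β' * (Q : ℝ) + (Q' : ℝ)) = β' * (P : ℝ) + (P' : ℝ) := by
    linear_combination hq2
  have hfac : (bb l - β') * ((Q : ℝ) * β' - (P : ℝ)) = 0 := by
    rw [hbb0] at hid2
    linear_combination hid2 - hq2'
  have hQβ'P : (Q : ℝ) * β' - (P : ℝ) ≠ 0 := by
    have : (Q : ℝ) * β' < 0 := mul_neg_of_pos_of_neg hQRpos hβ'neg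
    intro h0; nlinarith
  have hbbl : bb l = β' := by
    rcases mul_eq_zero.mp hfac with h | h
    · linarith [sub_eq_zero.mp h]
    · exact absurd h hQβ'P
  have hwl : w l = w 0 := by
    have h2 : w l ≠ 0 := hwne l le_rfl
    have h1 : -1 / w l = β' := by rw [← hbbl, hbbdef]
    have h3 : β' * w l = -1 := by
      rw [← h1]; field_simp
    have h4 : w l = -1 / β' := by
      rw [eq_div_iff hβ'ne]; linear_combination h3
    rw [h4, hw0]
  have hwlval : w l = (b (l - 1) : ℝ) + 1 / w (l - 1) := by
    have h9 := hwS (l - 1)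
    rwa [hl1] at h9
  have hw0gt1 : 1 < w 0 := hwl ▸ ((hwpos l le_rfl).2 hl)
  have hw1l9 : 0 < w (l - 1) := (hwpos (l - 1) (by omega)).1
  have hw0gtak : (a k : ℝ) + 1 < w 0 := by
    have hbl : (a k : ℝ) + 1 ≤ (b (l - 1) : ℝ) := by exact_mod_cast hlt
    have : 0 < 1 / w (l - 1) := by positivity
    rw [← hwl, hwlval]
    linarith
  -- the conjugate chain z (downward from β')
  set z : ℕ → ℝ := fun n => Nat.rec β' (fun j zj => (a (k - j) : ℝ) + 1 / zj) n with hzdef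
  have hz0 : z 0 = β' := rfl
  have hzS : ∀ j, z (j + 1) = (a (k - j) : ℝ) + 1 / z j := fun j => rfl
  have hz1 : z 1 = (a k : ℝ) - w 0 := by
    have e : z 1 = (a k : ℝ) + 1 / z 0 := hzS 0
    have h5 : 1 / β' = -w 0 := by rw [hw0]; field_simp
    rw [e, hz0]
    linarith
  have hz1lt : z 1 < -1 := by rw [hz1]; linarith
  have hz1inv : -1 < 1 / z 1 ∧ 1 / z 1 < 0 := by
    constructor
    · rw [lt_div_iff_of_neg (by linarith : z 1 < 0)]; linarith
    · exact div_neg_of_pos_of_neg one_pos (by linarith)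
  have hzpos : ∀ j, 2 ≤ j → j ≤ k → 0 < z j := by
    intro j
    induction j with
    | zero => omega
    | succ j ih =>
      intro h2 hjk
      rcases Nat.lt_or_ge j 2 with hj | hj
      · have hj1 : j = 1 := by omega
        subst hj1
        rw [hzS 1]
        have hak1 : (1 : ℝ) ≤ (a (k - 1) : ℝ) := by
          exact_mod_cast ha (k - 1) (by omega) (by omega)
        linarith [hz1inv.1]
      · have := ih hj (by omega)
        rw [hzS j]
        have hakj : (1 : ℝ) ≤ (a (k - j) : ℝ) := by
          exact_mod_cast ha (k - j) (by omega) (by omega)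
        have : 0 < 1 / z j := by positivity
        linarith
  have hzne : ∀ j, j ≤ k → z j ≠ 0 := by
    intro j hj
    match j with
    | 0 => exact hz0 ▸ hβ'ne
    | 1 => exact fun h0 => by rw [h0] at hz1lt; norm_num at hz1lt
    | (j + 2) => exact (hzpos (j + 2) (by omega) hj).ne'
  -- head matrix data
  set u : ℤ := cfNum a (k + 1) with hudef
  set u' : ℤ := cfNum a k with hu'def
  set v : ℤ := cfDen a (k + 1) with hvdef
  set v' : ℤ := cfDen a k with hv'def
  have hv1 : 1 ≤ v := (CFaux.den_head a k ha).2
  have hv'0 : 0 ≤ v' := (CFaux.den_head a k ha).1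
  have hvR : (1 : ℝ) ≤ (v : ℝ) := by exact_mod_cast hv1
  have hvne : ((v : ℤ) : ℝ) ≠ 0 := by
    apply Int.cast_ne_zero.mpr; omega
  -- α = F(β)
  have hhead : α * (β * (v : ℝ) + (v' : ℝ)) = β * (u : ℝ) + (u' : ℝ) := by
    have h := CFaux.tail_eq a (cfXi α) k
      (fun m hm => by
        have h1 := CFaux.xi_rec α hirr m
        rw [hexp m, if_pos hm] at h1
        exact h1)
      (fun m _ => (hξpos m).ne')
    exact h
  -- quadratic satisfied by β via pullback
  set A : ℤ := qa * u ^ 2 + qh * u * v + qb * v ^ 2 with hAdef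
  set B : ℤ := 2 * qa * u * u' + qh * (u * v' + u' * v) + 2 * qb * v * v' with hBdef
  set Cc : ℤ := qa * u' ^ 2 + qh * u' * v' + qb * v' ^ 2 with hCdef
  have hEβ : (A : ℝ) * β ^ 2 + (B : ℝ) * β + (Cc : ℝ) = 0 := by
    rw [hAdef, hBdef, hCdef]
    push_cast
    linear_combination ((β * (v : ℝ) + (v' : ℝ)) ^ 2) * hroot
      - ((qa : ℝ) * ((β * (u : ℝ) + (u' : ℝ)) + α * (β * (v : ℝ) + (v' : ℝ)))
          + (qh : ℝ) * (β * (v : ℝ) + (v' : ℝ))) * hhead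
  set m1 : ℤ := Q * B - A * (Q' - P) with hm1def
  set r1 : ℤ := Q * Cc + A * P' with hr1def
  have hlin : (m1 : ℝ) * β + (r1 : ℝ) = 0 := by
    rw [hm1def, hr1def]
    push_cast
    linear_combination (Q : ℝ) * hEβ - (A : ℝ) * hq1
  have hm10 : (m1 : ℝ) = 0 := by
    by_contra hm
    apply hβirr
    refine ⟨(-r1 : ℚ) / (m1 : ℚ), ?_⟩
    push_cast
    rw [div_eq_iff (by exact_mod_cast hm)]
    linarith
  have hr10 : (r1 : ℝ) = 0 := by
    rw [hm10, zero_mul, zero_add] at hlin; exact hlin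
  have hm10' : (Q : ℝ) * (B : ℝ) - (A : ℝ) * ((Q' : ℝ) - (P : ℝ)) = 0 := by
    rw [hm1def] at hm10; push_cast at hm10; linarith
  have hr10' : (Q : ℝ) * (Cc : ℝ) + (A : ℝ) * (P' : ℝ) = 0 := by
    rw [hr1def] at hr10; push_cast at hr10; linarith
  have hEβ' : (A : ℝ) * β' ^ 2 + (B : ℝ) * β' + (Cc : ℝ) = 0 := by
    have hQE : (Q : ℝ) * ((A : ℝ) * β' ^ 2 + (B : ℝ) * β' + (Cc : ℝ)) = 0 := by
      linear_combination (A : ℝ) * hq2 + β' * hm10' + hr10'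
    rcases mul_eq_zero.mp hQE with h | h
    · exact absurd h hQR
    · exact h
  -- the conjugate ᾱ
  have hdenne : β' * (v : ℝ) + (v' : ℝ) ≠ 0 := by
    intro h0
    apply hβ'irr
    refine ⟨(-v' : ℚ) / (v : ℚ), ?_⟩
    push_cast
    rw [div_eq_iff (by exact_mod_cast hvne)]
    linarith
  set αbar : ℝ := (β' * (u : ℝ) + (u' : ℝ)) / (β' * (v : ℝ) + (v' : ℝ)) with hαbardef
  have hαbar_mul : αbar * (β' * (v : ℝ) + (v' : ℝ)) = β' * (u : ℝ) + (u' : ℝ) := by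
    rw [hαbardef]; field_simp
  have hαbarroot : (qa : ℝ) * αbar ^ 2 + (qh : ℝ) * αbar + (qb : ℝ) = 0 := by
    have hkey : (qa : ℝ) * (β' * (u : ℝ) + (u' : ℝ)) ^ 2
        + (qh : ℝ) * (β' * (u : ℝ) + (u' : ℝ)) * (β' * (v : ℝ) + (v' : ℝ))
        + (qb : ℝ) * (β' * (v : ℝ) + (v' : ℝ)) ^ 2 = 0 := by
      have h := hEβ'
      rw [hAdef, hBdef, hCdef] at h
      push_cast at h
      linear_combination h
    have h2 : (qa : ℝ) * αbar ^ 2 + (qh : ℝ) * αbar + (qb : ℝ)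
        = ((qa : ℝ) * (β' * (u : ℝ) + (u' : ℝ)) ^ 2
          + (qh : ℝ) * (β' * (u : ℝ) + (u' : ℝ)) * (β' * (v : ℝ) + (v' : ℝ))
          + (qb : ℝ) * (β' * (v : ℝ) + (v' : ℝ)) ^ 2) / (β' * (v : ℝ) + (v' : ℝ)) ^ 2 := by
      rw [hαbardef]; field_simp
    rw [h2, hkey, zero_div]
  have hββ' : β' ≠ β := by linarith
  have hαbarne : αbar ≠ α := by
    intro he
    have h1 : α * (β' * (v : ℝ) + (v' : ℝ)) = β' * (u : ℝ) + (u' : ℝ) := by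
      rw [← he]; exact hαbar_mul
    have h2 : (β' - β) * (α * (v : ℝ) - (u : ℝ)) = 0 := by
      linear_combination h1 - hhead
    rcases mul_eq_zero.mp h2 with h | h
    · exact hββ' (by linarith [sub_eq_zero.mp h])
    · apply hirr
      refine ⟨(u : ℚ) / (v : ℚ), ?_⟩
      push_cast
      rw [div_eq_iff (by exact_mod_cast hvne)]
      linarith [sub_eq_zero.mp h]
  have hqaR : (qa : ℝ) ≠ 0 := Int.cast_ne_zero.mpr hqa
  have hsum1 : (qa : ℝ) * (αbar + α) + (qh : ℝ) = 0 := by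
    have hfc : (αbar - α) * ((qa : ℝ) * (αbar + α) + (qh : ℝ)) = 0 := by
      linear_combination hαbarroot - hroot
    rcases mul_eq_zero.mp hfc with h | h
    · exact absurd (sub_eq_zero.mp h) hαbarne
    · exact h
  have hsum2 : (qa : ℝ) * (α' + α) + (qh : ℝ) = 0 := by
    have hfc : (α' - α) * ((qa : ℝ) * (α' + α) + (qh : ℝ)) = 0 := by
      linear_combination hroot' - hroot
    rcases mul_eq_zero.mp hfc with h | h
    · exact absurd (sub_eq_zero.mp h) hne
    · exact h
  have hαbar' : αbar = α' := by
    have h0 : (qa : ℝ) * (αbar - α') = 0 := by linarith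
    rcases mul_eq_zero.mp h0 with h | h
    · exact absurd h hqaR
    · linarith [sub_eq_zero.mp h]
  -- value of the z chain
  have hz_val : z (k + 1) = α' := by
    have h := CFaux.tail_eq a (fun n => z (k + 1 - n)) k
      (fun m hm => by
        have h1 := hzS (k - m)
        have e1 : k - m + 1 = k + 1 - m := by omega
        have e2 : k - (k - m) = m := by omega
        have e3 : k + 1 - (m + 1) = k - m := by omega
        rw [e1, e2] at h1
        rw [e3, h1])
      (fun m hm => by
        have e3 : k + 1 - (m + 1) = k - m := by omega
        rw [e3]
        exact hzne (k - m) (by omega))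
    simp only [Nat.sub_zero, Nat.sub_self] at h
    rw [hz0] at h
    have hz_ab : z (k + 1) = αbar := by
      rw [hαbardef, eq_div_iff hdenne]
      linarith [h]
    rw [hz_ab, hαbar']
  -- the head chain s
  set s : ℕ → ℝ := fun n => Nat.rec (w (l - 1)) (fun j sj => (c (k + 1 - j) : ℝ) + 1 / sj) n
    with hsdef
  have hs0 : s 0 = w (l - 1) := rfl
  have hsS : ∀ j, s (j + 1) = (c (k + 1 - j) : ℝ) + 1 / s j := fun j => rfl
  have hs1 : s 1 = w 0 - (a k : ℝ) - 1 := by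
    have e : s 1 = (c (k + 1) : ℝ) + 1 / s 0 := hsS 0
    rw [e, hc_k1, hs0, ← hwl, hwlval]
    push_cast
    ring
  have hs1pos : 0 < s 1 := by rw [hs1]; linarith
  have hs2 : s 2 = 1 + 1 / s 1 := by
    have e : s 2 = (c k : ℝ) + 1 / s 1 := hsS 1
    rw [e, hc_k]
    norm_num
  have hs2gt : 1 < s 2 := by
    rw [hs2]
    have : 0 < 1 / s 1 := by positivity
    linarith
  have hs3 : s 3 = z 2 := by
    have e : s 3 = (c (k - 1) : ℝ) + 1 / s 2 := hsS 2
    have e' : z 2 = (a (k - 1) : ℝ) + 1 / z 1 := hzS 1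
    rw [e, e', hc_km1, hs2, hz1, hs1]
    have h1 : w 0 - (a k : ℝ) - 1 ≠ 0 := by linarith
    have h2 : (a k : ℝ) - w 0 ≠ 0 := by linarith
    have h3 : 1 + 1 / (w 0 - (a k : ℝ) - 1) ≠ 0 := by
      have : 0 < 1 / (w 0 - (a k : ℝ) - 1) := by
        apply div_pos one_pos; linarith
      linarith
    have h2' : w 0 - (a k : ℝ) ≠ 0 := by linarith
    push_cast
    have e1 : 1 + 1 / (w 0 - (a k : ℝ) - 1) = (w 0 - (a k : ℝ)) / (w 0 - (a k : ℝ) - 1) := by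
      field_simp; ring
    have e2 : 1 / ((a k : ℝ) - w 0) = -(1 / (w 0 - (a k : ℝ))) := by
      rw [← one_div_neg_eq_neg_one_div, neg_sub]
    rw [e1, e2, one_div_div]
    field_simp
    ring
  have hsz : ∀ j, j ≤ k - 1 → s (j + 3) = z (j + 2) := by
    intro j
    induction j with
    | zero => exact fun _ => hs3
    | succ j ih =>
      intro hj
      have ihh := ih (by omega)
      have eg1 : j + 1 + 3 = (j + 3) + 1 := by omega
      have eg2 : j + 1 + 2 = (j + 2) + 1 := by omega
      rw [eg1, eg2, hsS (j + 3), hzS (j + 2),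
        show k + 1 - (j + 3) = k - (j + 2) by omega, ihh]
      have : c (k - (j + 2)) = a (k - (j + 2)) := hc_lt _ (by omega)
      rw [this]
  have hskp2 : s (k + 2) = α' := by
    have h := hsz (k - 1) le_rfl
    rw [show k - 1 + 3 = k + 2 by omega, show k - 1 + 2 = k + 1 by omega] at h
    rw [h, hz_val]
  -- positivity of c in the middle range
  have hc_mid : ∀ i, 1 ≤ i → i ≤ k + 1 → 0 ≤ c i := by
    intro i h1 h2
    rcases Nat.lt_or_ge (i + 1) k with h | h
    · rw [hc_lt i h]; linarith [ha i h1 (by omega)]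
    · rcases Nat.eq_or_lt_of_le h with h' | h'
      · have : i = k - 1 := by omega
        subst this
        rw [hc_km1]
        have := ha (k - 1) (by omega) (by omega)
        omega
      · rcases Nat.eq_or_lt_of_le (show k ≤ i by omega) with h'' | h''
        · rw [← h'', hc_k]; norm_num
        · have : i = k + 1 := by omega
          subst this
          rw [hc_k1]; omega
  have hc0 : ∀ i, 1 ≤ i → 0 ≤ c i := by
    intro i h1
    rcases Nat.lt_or_ge i (k + 2) with h | h
    · exact hc_mid i h1 (by omega)
    · rw [hc_tail i h]
      have := hb ((2 * l - 2 - (i - (k + 2)) % l) % l) (Nat.mod_lt _ hl)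
      omega
  have hcK : ∀ i, k + 2 ≤ i → 1 ≤ c i := by
    intro i h
    rw [hc_tail i h]
    exact hb _ (Nat.mod_lt _ hl)
  -- positivity of s
  have hspos : ∀ j, 1 ≤ j → j ≤ k + 1 → 0 < s j := by
    intro j
    induction j with
    | zero => omega
    | succ j ih =>
      intro _ hj
      rcases Nat.eq_zero_or_pos j with hj0 | hj0
      · subst hj0; exact hs1pos
      · have hsj := ih hj0 (by omega)
        rw [hsS j]
        have hc' : (0 : ℝ) ≤ (c (k + 1 - j) : ℝ) := by
          exact_mod_cast hc_mid (k + 1 - j) (by omega) (by omega)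
        have : 0 < 1 / s j := by positivity
        linarith
  -- the full tail sequence t
  set t : ℕ → ℝ := fun n =>
      if n < k + 2 then s (k + 2 - n) else w (l - 1 - (n - (k + 2)) % l) with htdef
  have ht0 : t 0 = α' := by
    rw [htdef]; simp only
    rw [if_pos (by omega), Nat.sub_zero, hskp2]
  have htpos : ∀ n, 0 < t (n + 1) := by
    intro n
    rw [htdef]; simp only
    by_cases h : n + 1 < k + 2
    · rw [if_pos h]
      exact hspos (k + 2 - (n + 1)) (by omega) (by omega)
    · rw [if_neg h]
      exact (hwpos (l - 1 - (n + 1 - (k + 2)) % l) (by omega)).1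
  have htrec : ∀ n, t n = (c n : ℝ) + 1 / t (n + 1) := by
    intro n
    rcases Nat.lt_or_ge n (k + 2) with hn | hn
    · rcases Nat.lt_or_ge (n + 1) (k + 2) with hn1 | hn1
      · -- n ≤ k
        rw [htdef]; simp only
        rw [if_pos hn, if_pos hn1]
        have h1 := hsS (k + 1 - n)
        rw [show k + 1 - n + 1 = k + 2 - n by omega,
          show k + 1 - (k + 1 - n) = n by omega] at h1
        rw [show k + 2 - (n + 1) = k + 1 - n by omega]
        exact h1
      · -- n = k + 1
        have hnk : n = k + 1 := by omega
        subst hnk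
        rw [htdef]; simp only
        rw [if_pos (by omega), if_neg (by omega)]
        rw [show k + 1 + 1 - (k + 2) = 0 by omega, Nat.zero_mod, Nat.sub_zero]
        rw [show k + 2 - (k + 1) = 1 by omega]
        have h1 := hsS 0
        rw [Nat.sub_zero, hs0] at h1
        exact h1
    · -- tail range
      set m := n - (k + 2) with hmdef
      set r := m % l with hrdef
      have hr : r < l := Nat.mod_lt _ hl
      have hcn : c n = b ((2 * l - 2 - r) % l) := by rw [hc_tail n hn]
      have htn : t n = w (l - 1 - r) := by
        rw [htdef]; simp only
        rw [if_neg (by omega)]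
      have he : n + 1 - (k + 2) = m + 1 := by omega
      have hdm := Nat.div_add_mod m l
      rcases Nat.lt_or_ge (r + 1) l with hrl | hrl
      · -- r + 1 < l
        have e2 : (m + 1) % l = r + 1 := by
          have : m + 1 = r + 1 + l * (m / l) := by omega
          rw [this, Nat.add_mul_mod_self_left, Nat.mod_eq_of_lt hrl]
        have htn1 : t (n + 1) = w (l - 2 - r) := by
          rw [htdef]; simp only
          rw [if_neg (by omega), he, e2, show l - 1 - (r + 1) = l - 2 - r by omega]
        have hcn' : c n = b (l - 2 - r) := by
          rw [hcn, show 2 * l - 2 - r = l + (l - 2 - r) by omega,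
            Nat.add_mod_left, Nat.mod_eq_of_lt (by omega)]
        rw [htn, htn1, hcn']
        have h1 := hwS (l - 2 - r)
        rw [show l - 2 - r + 1 = l - 1 - r by omega] at h1
        exact h1
      · -- r = l - 1
        have hrl' : r = l - 1 := by omega
        have e2 : (m + 1) % l = 0 := by
          have h9 : m + 1 = l * (m / l + 1) := by
            rw [Nat.mul_succ]; omega
          rw [h9, Nat.mul_mod_right]
        have htn1 : t (n + 1) = w (l - 1) := by
          rw [htdef]; simp only
          rw [if_neg (by omega), he, e2, Nat.sub_zero]
        have hcn' : c n = b (l - 1) := by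
          rw [hcn, show 2 * l - 2 - r = l - 1 by omega,
            Nat.mod_eq_of_lt (by omega)]
        rw [htn, htn1, hcn', show l - 1 - r = 0 by omega]
        have h9 := hwlval
        rw [hwl] at h9
        exact h9
  have hfin := CFaux.conv_tendsto c t (k + 2) htrec htpos hc0 hcK
  rwa [ht0] at hfin


end
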